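/- arXiv:2212.02759 — 6 statements merged into one kernel-verified Lean document; each statement's English description precedes it below -/
import Mathlib

section
/- For every x ∈ ℝⁿ, ⟨a(x − π_a(x)) − b(x − π_b(x)), π_a(x) − π_b(x)⟩ ≥ 0. -/
open RealInnerProductSpace

/-- `⟨a(x − π_a x) − b(x − π_b x), π_a x − π_b x⟩ ≥ 0`. -/
theorem dgap_stmt3 {n : ℕ} (K : Set (EuclideanSpace ℝ (Fin n)))
    (hK : K.Nonempty) (hKc : IsClosed K) (hKconv : Convex ℝ K)
    (F : EuclideanSpace ℝ (Fin n) → EuclideanSpace ℝ (Fin n)) (hF : Continuous F)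
    (a b : ℝ) (ha : 0 < a) (hab : a < b)
    (P : EuclideanSpace ℝ (Fin n) → EuclideanSpace ℝ (Fin n))
    (hP : ∀ z, P z ∈ K ∧ ∀ y ∈ K, ⟪z - P z, y - P z⟫ ≤ 0) :
    ∀ x, 0 ≤ ⟪a • (x - P (x - a⁻¹ • F x)) - b • (x - P (x - b⁻¹ • F x)),
        P (x - a⁻¹ • F x) - P (x - b⁻¹ • F x)⟫ := by
  intro x
  have hb : 0 < b := ha.trans hab
  set u := P (x - a⁻¹ • F x) with hu
  set v := P (x - b⁻¹ • F x) with hv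
  have h1 := (hP (x - a⁻¹ • F x)).2 v (hP (x - b⁻¹ • F x)).1
  have h2 := (hP (x - b⁻¹ • F x)).2 u (hP (x - a⁻¹ • F x)).1
  simp only [← hu, ← hv] at h1 h2
  simp only [inner_sub_left, inner_sub_right, real_inner_smul_left, inner_smul_left,
    RCLike.inner_apply, map_inv₀, conj_trivial] at h1 h2 ⊢
  have e1 : (inner ℝ u v : ℝ) = inner ℝ v u := real_inner_comm v u
  have h1' : a * (inner ℝ x v : ℝ) - inner ℝ (F x) v - a * inner ℝ u v
      - a * inner ℝ x u + inner ℝ (F x) u + a * inner ℝ u u ≤ 0 := by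
    have h := mul_le_mul_of_nonneg_left h1 ha.le
    have he : a * ((inner ℝ x v : ℝ) - a⁻¹ * inner ℝ (F x) v - inner ℝ u v
        - (inner ℝ x u - a⁻¹ * inner ℝ (F x) u - inner ℝ u u))
        = a * (inner ℝ x v : ℝ) - inner ℝ (F x) v - a * inner ℝ u v
          - a * inner ℝ x u + inner ℝ (F x) u + a * inner ℝ u u := by
      field_simp
      ring
    linarith [he ▸ h]
  have hb0 : (0:ℝ) < b := ha.trans hab
  have h2' : b * (inner ℝ x u : ℝ) - inner ℝ (F x) u - b * inner ℝ v u
      - b * inner ℝ x v + inner ℝ (F x) v + b * inner ℝ v v ≤ 0 := by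
    have h := mul_le_mul_of_nonneg_left h2 hb0.le
    have he : b * ((inner ℝ x u : ℝ) - b⁻¹ * inner ℝ (F x) u - inner ℝ v u
        - (inner ℝ x v - b⁻¹ * inner ℝ (F x) v - inner ℝ v v))
        = b * (inner ℝ x u : ℝ) - inner ℝ (F x) u - b * inner ℝ v u
          - b * inner ℝ x v + inner ℝ (F x) v + b * inner ℝ v v := by
      field_simp
      ring
    linarith [he ▸ h]
  linarith [h1', h2', e1]
end

section
/- For every x ∈ ℝⁿ, ‖π_b(x) − π_a(x)‖ ≤ ((b − a)/a)·‖x − π_a(x)‖. -/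
open RealInnerProductSpace

/-- `‖π_b x − π_a x‖ ≤ ((b − a)/a)‖x − π_a x‖`. -/
theorem dgap_stmt4 {n : ℕ} (K : Set (EuclideanSpace ℝ (Fin n)))
    (hK : K.Nonempty) (hKc : IsClosed K) (hKconv : Convex ℝ K)
    (F : EuclideanSpace ℝ (Fin n) → EuclideanSpace ℝ (Fin n)) (hF : Continuous F)
    (a b : ℝ) (ha : 0 < a) (hab : a < b)
    (P : EuclideanSpace ℝ (Fin n) → EuclideanSpace ℝ (Fin n))
    (hP : ∀ z, P z ∈ K ∧ ∀ y ∈ K, ⟪z - P z, y - P z⟫ ≤ 0) :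
    ∀ x, ‖P (x - b⁻¹ • F x) - P (x - a⁻¹ • F x)‖ ≤
      (b - a) / a * ‖x - P (x - a⁻¹ • F x)‖ := by
  intro x
  have hb : 0 < b := ha.trans hab
  set u := x - b⁻¹ • F x with hu
  set v := x - a⁻¹ • F x with hv
  set p := P u with hp
  set q := P v with hq
  have h1 := (hP u).2 q (hP v).1
  have h2 := (hP v).2 p (hP u).1
  have e1 : u - p = (x - p) - b⁻¹ • F x := by rw [hu]; abel
  have e2 : v - q = (x - q) - a⁻¹ • F x := by rw [hv]; abel
  rw [e1, inner_sub_left, real_inner_smul_left] at h1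
  rw [e2, inner_sub_left, real_inner_smul_left] at h2
  set s := ⟪F x, p - q⟫ with hs
  set t := ⟪x - q, p - q⟫ with ht
  set d := ‖p - q‖ with hd
  set N := ‖x - q‖ with hN
  have eF : ⟪F x, q - p⟫ = -s := by
    rw [hs, ← inner_neg_right, neg_sub]
  have exp1 : ⟪x - p, q - p⟫ = d ^ 2 - t := by
    have hx : x - p = (x - q) - (p - q) := by abel
    rw [hx, ← neg_sub p q, inner_neg_right, inner_sub_left,
      real_inner_self_eq_norm_sq, ← ht, ← hd]
    ring
  rw [exp1, eF] at h1
  -- h1 : d^2 - t - b⁻¹ * (-s) ≤ 0,  h2 : t - a⁻¹ * s ≤ 0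
  have hb' : b * b⁻¹ = 1 := mul_inv_cancel₀ hb.ne'
  have ha' : a * a⁻¹ = 1 := mul_inv_cancel₀ ha.ne'
  have hs1' : b⁻¹ * s ≤ t - d ^ 2 := by linarith
  have hs2' : t ≤ a⁻¹ * s := by linarith
  have hs1 : s ≤ b * (t - d ^ 2) := by
    have := mul_le_mul_of_nonneg_left hs1' hb.le
    rwa [← mul_assoc, hb', one_mul] at this
  have hs2 : a * t ≤ s := by
    have := mul_le_mul_of_nonneg_left hs2' ha.le
    rwa [← mul_assoc, ha', one_mul] at this
  have hcs : t ≤ N * d := by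
    rw [ht, hN, hd]; exact real_inner_le_norm _ _
  have hd0 : 0 ≤ d := norm_nonneg _
  have hN0 : 0 ≤ N := norm_nonneg _
  have hba : (0:ℝ) ≤ b - a := by linarith
  have key : b * d ^ 2 ≤ (b - a) * (N * d) := by
    nlinarith [mul_le_mul_of_nonneg_left hcs hba]
  show d ≤ (b - a) / a * N
  clear_value s t d N p q u v
  rcases eq_or_lt_of_le hd0 with h0 | h0
  · rw [← h0]
    positivity
  · have hbd : b * d ≤ (b - a) * N := by
      have : (b * d) * d ≤ ((b - a) * N) * d := by ring_nf; ring_nf at key; linarith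
      exact le_of_mul_le_mul_right this h0
    rw [div_mul_eq_mul_div, le_div_iff₀ ha]
    nlinarith [mul_le_mul_of_nonneg_right hab.le hd0]
end

section
/- For every x ∈ ℝⁿ, ‖x − π_b(x)‖ ≤ ‖x − π_a(x)‖ ≤ (b/a)·‖x − π_b(x)‖. -/
open RealInnerProductSpace

/-- Scalar core of the argument. -/
lemma dgap_stmt5_aux (s t Pn Qn ipq dp dq : ℝ)
    (hs : 0 < s) (ht : 0 < t) (hst : s < t)
    (hnp : 0 ≤ Pn) (hnq : 0 ≤ Qn)
    (cauchy : ipq ≤ Pn * Qn)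
    (h1 : Pn ^ 2 - s * dp - (ipq - s * dq) ≤ 0)
    (h2 : Qn ^ 2 - t * dq - (ipq - t * dp) ≤ 0) :
    Pn ≤ Qn ∧ s * Qn ≤ t * Pn := by
  have hA : Pn ^ 2 - ipq ≤ s * (dp - dq) := by nlinarith
  have hB : Qn ^ 2 - ipq ≤ t * (dq - dp) := by nlinarith
  have hdpq : dp - dq ≤ 0 := by
    nlinarith [sq_nonneg (Pn - Qn)]
  have hsd : s * (dp - dq) ≤ 0 := mul_nonpos_iff.mpr (Or.inl ⟨hs.le, hdpq⟩)
  have hP2 : Pn ^ 2 ≤ Pn * Qn := by linarith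
  have claim1 : Pn ≤ Qn := by nlinarith [sq_nonneg (Pn - Qn)]
  have hA' := mul_le_mul_of_nonneg_left hA ht.le
  have hB' := mul_le_mul_of_nonneg_left hB hs.le
  have key : t * Pn ^ 2 + s * Qn ^ 2 ≤ (t + s) * ipq := by nlinarith
  refine ⟨claim1, ?_⟩
  rcases eq_or_lt_of_le claim1 with h | h
  · rw [h]
    exact mul_le_mul_of_nonneg_right hst.le hnq
  · nlinarith [mul_le_mul_of_nonneg_left cauchy (by positivity : (0:ℝ) ≤ t + s)]

/-- `‖x − π_b x‖ ≤ ‖x − π_a x‖ ≤ (b/a)‖x − π_b x‖`. -/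
theorem dgap_stmt5 {n : ℕ} (K : Set (EuclideanSpace ℝ (Fin n)))
    (hK : K.Nonempty) (hKc : IsClosed K) (hKconv : Convex ℝ K)
    (F : EuclideanSpace ℝ (Fin n) → EuclideanSpace ℝ (Fin n)) (hF : Continuous F)
    (a b : ℝ) (ha : 0 < a) (hab : a < b)
    (P : EuclideanSpace ℝ (Fin n) → EuclideanSpace ℝ (Fin n))
    (hP : ∀ z, P z ∈ K ∧ ∀ y ∈ K, ⟪z - P z, y - P z⟫ ≤ 0) :
    ∀ x, ‖x - P (x - b⁻¹ • F x)‖ ≤ ‖x - P (x - a⁻¹ • F x)‖ ∧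
      ‖x - P (x - a⁻¹ • F x)‖ ≤ b / a * ‖x - P (x - b⁻¹ • F x)‖ := by
  intro x
  have hb : 0 < b := ha.trans hab
  set d := F x with hd
  set u := P (x - b⁻¹ • d) with hu
  set v := P (x - a⁻¹ • d) with hv
  set p := x - u with hp
  set q := x - v with hq
  have h1 : ⟪(x - b⁻¹ • d) - u, v - u⟫ ≤ 0 := (hP _).2 v (hP _).1
  have h2 : ⟪(x - a⁻¹ • d) - v, u - v⟫ ≤ 0 := (hP _).2 u (hP _).1
  have e1 : (x - b⁻¹ • d) - u = p - b⁻¹ • d := by rw [hp]; abel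
  have e2 : v - u = p - q := by rw [hp, hq]; abel
  have e3 : (x - a⁻¹ • d) - v = q - a⁻¹ • d := by rw [hq]; abel
  have e4 : u - v = q - p := by rw [hp, hq]; abel
  rw [e1, e2] at h1
  rw [e3, e4] at h2
  simp only [inner_sub_left, inner_sub_right, real_inner_smul_left,
    real_inner_self_eq_norm_sq] at h1 h2
  rw [← real_inner_comm q p] at h2
  have cauchy : ⟪p, q⟫ ≤ ‖p‖ * ‖q‖ := real_inner_le_norm p q
  have hst : b⁻¹ < a⁻¹ := (inv_lt_inv₀ hb ha).mpr hab
  have hs : 0 < b⁻¹ := inv_pos.mpr hb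
  have ht : 0 < a⁻¹ := inv_pos.mpr ha
  obtain ⟨claim1, claim2⟩ :=
    dgap_stmt5_aux b⁻¹ a⁻¹ ‖p‖ ‖q‖ ⟪p, q⟫ ⟪d, p⟫ ⟪d, q⟫ hs ht hst
      (norm_nonneg p) (norm_nonneg q) cauchy (by linarith [h1]) (by linarith [h2])
  refine ⟨claim1, ?_⟩
  rw [div_mul_eq_mul_div, le_div_iff₀ ha]
  calc ‖q‖ * a = (b * a) * (b⁻¹ * ‖q‖) := by field_simp
    _ ≤ (b * a) * (a⁻¹ * ‖p‖) := by
        apply mul_le_mul_of_nonneg_left claim2 (by positivity)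
    _ = b * ‖p‖ := by field_simp
end

section
/- For every x ∈ ℝⁿ the D-gap function satisfies the two-sided estimate ((b − a)/2)‖x − π_b(x)‖² + (a/2)‖π_b(x) − π_a(x)‖² ≤ f_{ab}(x) ≤ ((b − a)/2)‖x − π_a(x)‖² − (b/2)‖π_b(x) − π_a(x)‖². -/
open RealInnerProductSpace

lemma dgap_key {n : ℕ} (c : ℝ) (hc : 0 < c) (x y z p v : EuclideanSpace ℝ (Fin n))
    (hz : z = x - c⁻¹ • v) (hproj : ⟪z - p, y - p⟫ ≤ 0) :
    (⟪v, x - y⟫ - c / 2 * ‖y - x‖ ^ 2) + c / 2 * ‖y - p‖ ^ 2 ≤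
      ⟪v, x - p⟫ - c / 2 * ‖p - x‖ ^ 2 := by
  have hv : v = c • (x - z) := by
    rw [hz, sub_sub_cancel, smul_smul, mul_inv_cancel₀ hc.ne', one_smul]
  have e1 : ‖p - x‖ ^ 2 = ⟪p - x, p - x⟫ := (real_inner_self_eq_norm_sq _).symm
  have e2 : ‖y - x‖ ^ 2 = ⟪y - x, y - x⟫ := (real_inner_self_eq_norm_sq _).symm
  have e3 : ‖y - p‖ ^ 2 = ⟪y - p, y - p⟫ := (real_inner_self_eq_norm_sq _).symm
  have key : (⟪v, x - p⟫ - c / 2 * ‖p - x‖ ^ 2) -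
      ((⟪v, x - y⟫ - c / 2 * ‖y - x‖ ^ 2) + c / 2 * ‖y - p‖ ^ 2) =
      -(c * ⟪z - p, y - p⟫) := by
    simp only [hv, e1, e2, e3, real_inner_smul_left, inner_sub_left, inner_sub_right,
      real_inner_comm x y, real_inner_comm x z, real_inner_comm x p,
      real_inner_comm y z, real_inner_comm y p, real_inner_comm z p]
    ring
  nlinarith [mul_nonpos_of_nonneg_of_nonpos hc.le hproj]

/-- two-sided estimate for the D-gap function `f_ab = f_a - f_b`. -/
theorem dgap_stmt6 {n : ℕ} (K : Set (EuclideanSpace ℝ (Fin n)))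
    (hK : K.Nonempty) (hKc : IsClosed K) (hKconv : Convex ℝ K)
    (F : EuclideanSpace ℝ (Fin n) → EuclideanSpace ℝ (Fin n)) (hF : Continuous F)
    (a b : ℝ) (ha : 0 < a) (hab : a < b)
    (P : EuclideanSpace ℝ (Fin n) → EuclideanSpace ℝ (Fin n))
    (hP : ∀ z, P z ∈ K ∧ ∀ y ∈ K, ⟪z - P z, y - P z⟫ ≤ 0)
    (fa fb : EuclideanSpace ℝ (Fin n) → ℝ)
    (hfa : ∀ x, IsGreatest
      ((fun y => ⟪F x, x - y⟫ - a / 2 * ‖y - x‖ ^ 2) '' K) (fa x))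
    (hfb : ∀ x, IsGreatest
      ((fun y => ⟪F x, x - y⟫ - b / 2 * ‖y - x‖ ^ 2) '' K) (fb x)) :
    ∀ x, (b - a) / 2 * ‖x - P (x - b⁻¹ • F x)‖ ^ 2 +
        a / 2 * ‖P (x - b⁻¹ • F x) - P (x - a⁻¹ • F x)‖ ^ 2 ≤ fa x - fb x ∧
      fa x - fb x ≤ (b - a) / 2 * ‖x - P (x - a⁻¹ • F x)‖ ^ 2 -
        b / 2 * ‖P (x - b⁻¹ • F x) - P (x - a⁻¹ • F x)‖ ^ 2 := by
  intro x
  have hb : 0 < b := ha.trans hab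
  set πa := P (x - a⁻¹ • F x) with hπa
  set πb := P (x - b⁻¹ • F x) with hπb
  obtain ⟨hπaK, hπaP⟩ := hP (x - a⁻¹ • F x)
  obtain ⟨hπbK, hπbP⟩ := hP (x - b⁻¹ • F x)
  -- fa x = value at πa
  have hfaval : fa x = ⟪F x, x - πa⟫ - a / 2 * ‖πa - x‖ ^ 2 := by
    obtain ⟨y₀, hy₀K, hy₀⟩ := (hfa x).1
    have h1 : (fun y => ⟪F x, x - y⟫ - a / 2 * ‖y - x‖ ^ 2) y₀ ≤
        ⟪F x, x - πa⟫ - a / 2 * ‖πa - x‖ ^ 2 := by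
      have := dgap_key a ha x y₀ (x - a⁻¹ • F x) πa (F x) rfl (hπaP y₀ hy₀K)
      nlinarith [sq_nonneg ‖y₀ - πa‖, ha.le]
    have h2 := (hfa x).2 ⟨πa, hπaK, rfl⟩
    simp only at h2 ⊢
    linarith [hy₀ ▸ h1]
  have hfbval : fb x = ⟪F x, x - πb⟫ - b / 2 * ‖πb - x‖ ^ 2 := by
    obtain ⟨y₀, hy₀K, hy₀⟩ := (hfb x).1
    have h1 : (fun y => ⟪F x, x - y⟫ - b / 2 * ‖y - x‖ ^ 2) y₀ ≤
        ⟪F x, x - πb⟫ - b / 2 * ‖πb - x‖ ^ 2 := by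
      have := dgap_key b hb x y₀ (x - b⁻¹ • F x) πb (F x) rfl (hπbP y₀ hy₀K)
      nlinarith [sq_nonneg ‖y₀ - πb‖, hb.le]
    have h2 := (hfb x).2 ⟨πb, hπbK, rfl⟩
    simp only at h2 ⊢
    linarith [hy₀ ▸ h1]
  have hlow := dgap_key a ha x πb (x - a⁻¹ • F x) πa (F x) rfl (hπaP πb hπbK)
  have hup := dgap_key b hb x πa (x - b⁻¹ • F x) πb (F x) rfl (hπbP πa hπaK)
  have n1 : ‖x - πb‖ = ‖πb - x‖ := norm_sub_rev _ _
  have n2 : ‖x - πa‖ = ‖πa - x‖ := norm_sub_rev _ _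
  have n3 : ‖πb - πa‖ = ‖πa - πb‖ := norm_sub_rev _ _
  rw [n3] at hlow
  constructor
  · rw [hfaval, hfbval, n1, n3]; linarith
  · rw [hfaval, hfbval, n2, n3]; linarith
end

section
/- For every x ∈ ℝⁿ, f_{ab}(x) = ⟨F(x), π_b(x) − π_a(x)⟩ − (a/2)‖x − π_a(x)‖² + (b/2)‖x − π_b(x)‖². -/
open RealInnerProductSpace

lemma dgap_aux {n : ℕ} (K : Set (EuclideanSpace ℝ (Fin n)))
    (P : EuclideanSpace ℝ (Fin n) → EuclideanSpace ℝ (Fin n))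
    (hP : ∀ z, P z ∈ K ∧ ∀ y ∈ K, ⟪z - P z, y - P z⟫ ≤ 0)
    (g : EuclideanSpace ℝ (Fin n)) (c : ℝ) (hc : 0 < c)
    (x : EuclideanSpace ℝ (Fin n)) (fc : ℝ)
    (hfc : IsGreatest ((fun y => ⟪g, x - y⟫ - c / 2 * ‖y - x‖ ^ 2) '' K) fc) :
    fc = ⟪g, x - P (x - c⁻¹ • g)⟫ - c / 2 * ‖P (x - c⁻¹ • g) - x‖ ^ 2 := by
  set π := P (x - c⁻¹ • g) with hπ
  have hπK : π ∈ K := (hP _).1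
  have hub : ∀ y ∈ K, ⟪g, x - y⟫ - c / 2 * ‖y - x‖ ^ 2 ≤
      ⟪g, x - π⟫ - c / 2 * ‖π - x‖ ^ 2 := by
    intro y hy
    have h1 : ⟪(x - c⁻¹ • g) - π, y - π⟫ ≤ 0 := (hP _).2 y hy
    have h2 : ⟪x - π, y - π⟫ - c⁻¹ * ⟪g, y - π⟫ ≤ 0 := by
      have : ((x - c⁻¹ • g) - π : EuclideanSpace ℝ (Fin n)) = (x - π) - c⁻¹ • g := by
        abel
      rw [this, inner_sub_left, real_inner_smul_left] at h1
      linarith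
    have h3 : c * ⟪x - π, y - π⟫ ≤ ⟪g, y - π⟫ := by
      have h := mul_le_mul_of_nonneg_left h2 hc.le
      rw [mul_sub, ← mul_assoc, mul_inv_cancel₀ hc.ne', one_mul, mul_zero] at h
      linarith
    have hnorm : ‖y - x‖ ^ 2 = ‖y - π‖ ^ 2 - 2 * ⟪x - π, y - π⟫ + ‖π - x‖ ^ 2 := by
      have h4 : (y - x : EuclideanSpace ℝ (Fin n)) = (y - π) - (x - π) := by abel
      rw [h4, @norm_sub_sq_real, real_inner_comm]
      have : ‖x - π‖ = ‖π - x‖ := by rw [norm_sub_rev]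
      rw [this]
    have h5 : ⟪g, x - y⟫ = ⟪g, x - π⟫ - ⟪g, y - π⟫ := by
      rw [← inner_sub_right]; congr 1; abel
    have hn : (0:ℝ) ≤ ‖y - π‖ ^ 2 := by positivity
    rw [h5, hnorm]; nlinarith
  obtain ⟨⟨y₀, hy₀, hval⟩, hUB⟩ := hfc
  have h1 : fc ≤ ⟪g, x - π⟫ - c / 2 * ‖π - x‖ ^ 2 := by
    rw [← hval]; exact hub y₀ hy₀
  have h2 : ⟪g, x - π⟫ - c / 2 * ‖π - x‖ ^ 2 ≤ fc := hUB ⟨π, hπK, rfl⟩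
  linarith

/-- explicit formula for the D-gap function `f_ab = f_a - f_b`. -/
theorem dgap_stmt7 {n : ℕ} (K : Set (EuclideanSpace ℝ (Fin n)))
    (hK : K.Nonempty) (hKc : IsClosed K) (hKconv : Convex ℝ K)
    (F : EuclideanSpace ℝ (Fin n) → EuclideanSpace ℝ (Fin n)) (hF : Continuous F)
    (a b : ℝ) (ha : 0 < a) (hab : a < b)
    (P : EuclideanSpace ℝ (Fin n) → EuclideanSpace ℝ (Fin n))
    (hP : ∀ z, P z ∈ K ∧ ∀ y ∈ K, ⟪z - P z, y - P z⟫ ≤ 0)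
    (fa fb : EuclideanSpace ℝ (Fin n) → ℝ)
    (hfa : ∀ x, IsGreatest
      ((fun y => ⟪F x, x - y⟫ - a / 2 * ‖y - x‖ ^ 2) '' K) (fa x))
    (hfb : ∀ x, IsGreatest
      ((fun y => ⟪F x, x - y⟫ - b / 2 * ‖y - x‖ ^ 2) '' K) (fb x)) :
    ∀ x, fa x - fb x = ⟪F x, P (x - b⁻¹ • F x) - P (x - a⁻¹ • F x)⟫ -
        a / 2 * ‖x - P (x - a⁻¹ • F x)‖ ^ 2 + b / 2 * ‖x - P (x - b⁻¹ • F x)‖ ^ 2 := by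
  intro x
  have hA := dgap_aux K P hP (F x) a ha x (fa x) (hfa x)
  have hB := dgap_aux K P hP (F x) b (ha.trans hab) x (fb x) (hfb x)
  rw [hA, hB]
  rw [norm_sub_rev (P (x - a⁻¹ • F x)), norm_sub_rev (P (x - b⁻¹ • F x))]
  rw [show (P (x - b⁻¹ • F x) - P (x - a⁻¹ • F x) : EuclideanSpace ℝ (Fin n)) =
    (x - P (x - a⁻¹ • F x)) - (x - P (x - b⁻¹ • F x)) by abel]
  simp only [inner_sub_right]
  ring
end

section
/- The D-gap function f_{ab} is nonnegative on ℝⁿ, and f_{ab}(x) = 0 if and only if x solves the variational inequality problem, i.e., x ∈ K and ⟨F(x), y − x⟩ ≥ 0 for all y ∈ K. -/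
open RealInnerProductSpace

lemma dgap_aux_nonpos {s C : ℝ} (hC : 0 ≤ C)
    (h : ∀ t : ℝ, 0 < t → t ≤ 1 → s ≤ t * C) : s ≤ 0 := by
  by_contra hs
  push_neg at hs
  rcases eq_or_lt_of_le hC with hC0 | hC0
  · have := h 1 one_pos le_rfl
    rw [← hC0] at this
    linarith
  · have ht : 0 < s / (2 * C) := by positivity
    have h1 := h (min 1 (s / (2 * C))) (lt_min one_pos ht) (min_le_left _ _)
    have h2 : min 1 (s / (2 * C)) * C ≤ s / (2 * C) * C :=
      mul_le_mul_of_nonneg_right (min_le_right _ _) hC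
    have h3 : s / (2 * C) * C = s / 2 := by field_simp
    linarith

/-- `f_ab ≥ 0` and `f_ab x = 0` iff `x` solves (VIP). -/
theorem dgap_stmt8 {n : ℕ} (K : Set (EuclideanSpace ℝ (Fin n)))
    (hK : K.Nonempty) (hKc : IsClosed K) (hKconv : Convex ℝ K)
    (F : EuclideanSpace ℝ (Fin n) → EuclideanSpace ℝ (Fin n)) (hF : Continuous F)
    (a b : ℝ) (ha : 0 < a) (hab : a < b)
    (fa fb : EuclideanSpace ℝ (Fin n) → ℝ)
    (hfa : ∀ x, IsGreatest
      ((fun y => ⟪F x, x - y⟫ - a / 2 * ‖y - x‖ ^ 2) '' K) (fa x))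
    (hfb : ∀ x, IsGreatest
      ((fun y => ⟪F x, x - y⟫ - b / 2 * ‖y - x‖ ^ 2) '' K) (fb x)) :
    ∀ x, 0 ≤ fa x - fb x ∧
      (fa x - fb x = 0 ↔ x ∈ K ∧ ∀ y ∈ K, 0 ≤ ⟪F x, y - x⟫) := by
  intro x
  obtain ⟨⟨ya, hya, hyaeq⟩, huba⟩ := hfa x
  obtain ⟨⟨yb, hyb, hybeq⟩, hubb⟩ := hfb x
  simp only at hyaeq hybeq
  have hfa_ge : ∀ y ∈ K, ⟪F x, x - y⟫ - a / 2 * ‖y - x‖ ^ 2 ≤ fa x :=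
    fun y hy => huba ⟨y, hy, rfl⟩
  have hfb_ge : ∀ y ∈ K, ⟪F x, x - y⟫ - b / 2 * ‖y - x‖ ^ 2 ≤ fb x :=
    fun y hy => hubb ⟨y, hy, rfl⟩
  have hnn : 0 ≤ fa x - fb x := by
    have h1 := hfa_ge yb hyb
    nlinarith [sq_nonneg ‖yb - x‖]
  refine ⟨hnn, ?_, ?_⟩
  · -- forward: fa x - fb x = 0 → VIP
    intro h0
    have h0' : fa x = fb x := by linarith
    have h1 := hfa_ge yb hyb
    have h2 : b / 2 * ‖yb - x‖ ^ 2 ≤ a / 2 * ‖yb - x‖ ^ 2 := by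
      have e := hybeq
      rw [← h0'] at e
      linarith
    have h3 : ‖yb - x‖ ^ 2 ≤ 0 := by nlinarith [sq_nonneg ‖yb - x‖]
    have hyb0 : ‖yb - x‖ ^ 2 = 0 := le_antisymm h3 (sq_nonneg _)
    have hybx : yb = x :=
      sub_eq_zero.mp (norm_eq_zero.mp (pow_eq_zero_iff (two_ne_zero) |>.mp hyb0))
    have hxK : x ∈ K := hybx ▸ hyb
    have hfb0 : fb x = 0 := by rw [← hybeq, hybx]; simp
    have hfa0 : fa x = 0 := by rw [h0', hfb0]
    refine ⟨hxK, fun y hy => ?_⟩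
    set s : ℝ := ⟪F x, x - y⟫ with hs
    have hkey : ∀ t : ℝ, 0 < t → t ≤ 1 → s ≤ t * (a / 2 * ‖y - x‖ ^ 2) := by
      intro t ht0 ht1
      have hz : (1 - t) • x + t • y ∈ K :=
        hKconv hxK hy (by linarith) (le_of_lt ht0) (by ring)
      have h4 := hfa_ge _ hz
      have e1 : x - ((1 - t) • x + t • y) = t • (x - y) := by module
      have e2 : ((1 - t) • x + t • y) - x = t • (y - x) := by module
      rw [e1, e2, real_inner_smul_right, norm_smul, hfa0, Real.norm_eq_abs,
        abs_of_pos ht0] at h4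
      have h5 : t * s ≤ t * (t * (a / 2 * ‖y - x‖ ^ 2)) := by nlinarith [h4]
      exact le_of_mul_le_mul_left h5 ht0
    have hsle : s ≤ 0 := dgap_aux_nonpos (by positivity) hkey
    have hneg : ⟪F x, y - x⟫ = -⟪F x, x - y⟫ := by rw [← inner_neg_right, neg_sub]
    rw [hneg]
    linarith
  · -- reverse
    intro ⟨hxK, hvi⟩
    have hx0 : ⟪F x, x - x⟫ - a / 2 * ‖x - x‖ ^ 2 = 0 := by
      simp
    have hfa_le : fa x ≤ 0 := by
      rw [← hyaeq]
      have h1 : 0 ≤ ⟪F x, ya - x⟫ := hvi ya hya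
      have h2 : ⟪F x, x - ya⟫ = -⟪F x, ya - x⟫ := by
        rw [← inner_neg_right, neg_sub]
      nlinarith [sq_nonneg ‖ya - x‖]
    have hfb_le : fb x ≤ 0 := by
      rw [← hybeq]
      have h1 : 0 ≤ ⟪F x, yb - x⟫ := hvi yb hyb
      have h2 : ⟪F x, x - yb⟫ = -⟪F x, yb - x⟫ := by
        rw [← inner_neg_right, neg_sub]
      nlinarith [sq_nonneg ‖yb - x‖]
    have ha0 := hfa_ge x hxK
    have hb0 := hfb_ge x hxK
    simp at ha0 hb0
    linarith
end
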